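/- The assignment x_i ↦ x_i extends to a well-defined group homomorphism G_F → G_BV, and this homomorphism is injective; that is, the generators x_i generate a copy of Thompson's group F inside G_BV. -/

import Mathlib

/-- Relator corresponding to the equation `u = v`. -/
def grel {α : Type*} (u v : FreeGroup α) : FreeGroup α := u * v⁻¹

/-- Generators of the braided Thompson group `BV`.  `s i` denotes `σ_{i+1}` and
`t i` denotes `τ_{i+1}` (so that exactly the generators `σ_i, τ_i` with `i ≥ 1` occur). -/
inductive BVGen : Type
  | x : ℕ → BVGen
  | s : ℕ → BVGen
  | t : ℕ → BVGen

namespace BVGen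

/-- The free-group letter `x_i`. -/
def X (i : ℕ) : FreeGroup BVGen := FreeGroup.of (BVGen.x i)

/-- The free-group letter `σ_i` (meaningful for `i ≥ 1`). -/
def S (i : ℕ) : FreeGroup BVGen := FreeGroup.of (BVGen.s (i - 1))

/-- The free-group letter `τ_i` (meaningful for `i ≥ 1`). -/
def T (i : ℕ) : FreeGroup BVGen := FreeGroup.of (BVGen.t (i - 1))

/-- The defining relations of the braided Thompson group `BV`. -/
def bvRels : Set (FreeGroup BVGen) :=
  { g |
    (∃ i j, i < j ∧ g = grel (X j * X i) (X i * X (j + 1))) ∨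
    (∃ i j, 1 ≤ i ∧ i + 2 ≤ j ∧ g = grel (S i * S j) (S j * S i)) ∨
    (∃ i, 1 ≤ i ∧ g = grel (S i * S (i + 1) * S i) (S (i + 1) * S i * S (i + 1))) ∨
    (∃ i j, 1 ≤ i ∧ i + 2 ≤ j ∧ g = grel (S i * T j) (T j * S i)) ∨
    (∃ i, 1 ≤ i ∧ g = grel (S i * T (i + 1) * S i) (T (i + 1) * S i * T (i + 1))) ∨
    (∃ i j, 1 ≤ i ∧ i < j ∧ g = grel (S i * X j) (X j * S i)) ∨
    (∃ i, 1 ≤ i ∧ g = grel (S i * X i) (X (i - 1) * S (i + 1) * S i)) ∨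
    (∃ i j, j + 2 ≤ i ∧ g = grel (S i * X j) (X j * S (i + 1))) ∨
    (∃ i, g = grel (S (i + 1) * X i) (X (i + 1) * S (i + 1) * S (i + 2))) ∨
    (∃ i j, j + 2 ≤ i ∧ g = grel (T i * X j) (X j * T (i + 1))) ∨
    (∃ i, 1 ≤ i ∧ g = grel (T i * X (i - 1)) (S i * T (i + 1))) ∨
    (∃ i, 1 ≤ i ∧ g = grel (T i) (X (i - 1) * T (i + 1) * S i)) }

end BVGen

/-- The braided Thompson group `BV`, given by its infinite presentation. -/
abbrev GBV : Type := PresentedGroup BVGen.bvRels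

namespace GBV

/-- The generator `x_i` of `BV`. -/
def xg (i : ℕ) : GBV := PresentedGroup.of (BVGen.x i)

/-- The generator `σ_i` of `BV` (meaningful for `i ≥ 1`). -/
def sg (i : ℕ) : GBV := PresentedGroup.of (BVGen.s (i - 1))

/-- The generator `τ_i` of `BV` (meaningful for `i ≥ 1`). -/
def tg (i : ℕ) : GBV := PresentedGroup.of (BVGen.t (i - 1))

/-- H_n: the subgroup of `BV` generated by the B_n generators
`σ_1, …, σ_{n-2}, τ_{n-1}`. -/
def Hn (n : ℕ) : Subgroup GBV :=
  Subgroup.closure ({g | ∃ i, 1 ≤ i ∧ i + 2 ≤ n ∧ g = sg i} ∪ {tg (n - 1)})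

end GBV

/-- The defining relations of Thompson's group `F`:
`x_j x_i = x_i x_{j+1}` for `j > i`. -/
def fRels : Set (FreeGroup ℕ) :=
  { g | ∃ i j : ℕ, i < j ∧
      g = grel (FreeGroup.of j * FreeGroup.of i) (FreeGroup.of i * FreeGroup.of (j + 1)) }

/-- Thompson's group `F`, via its infinite presentation. -/
abbrev GF : Type := PresentedGroup fRels

namespace FBV

abbrev Ca := ℕ → Bool

def cons (b : Bool) (w : Ca) : Ca := fun n =>
  match n with
  | 0 => b
  | n+1 => w n

def tl (w : Ca) : Ca := fun n => w (n+1)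

@[simp] lemma cons_zero (b : Bool) (w : Ca) : cons b w 0 = b := rfl
@[simp] lemma cons_succ (b : Bool) (w : Ca) (n : ℕ) : cons b w (n+1) = w n := rfl
@[simp] lemma tl_cons (b : Bool) (w : Ca) : tl (cons b w) = w := rfl

lemma cons_tl (w : Ca) : cons (w 0) (tl w) = w := by
  funext n; cases n <;> rfl

lemma cons_inj {b b' : Bool} {u u' : Ca} (h : cons b u = cons b' u') : b = b' ∧ u = u' := by
  constructor
  · exact congrFun h 0
  · funext n; exact congrFun h (n+1)

lemma exists_cons (w : Ca) : ∃ b u, w = cons b u :=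
  ⟨w 0, tl w, (cons_tl w).symm⟩

lemma cases3 (w : Ca) :
    (∃ u, w = cons false u) ∨ (∃ u, w = cons true (cons false u)) ∨
      (∃ u, w = cons true (cons true u)) := by
  obtain ⟨b, u, rfl⟩ := exists_cons w
  cases b
  · exact Or.inl ⟨u, rfl⟩
  · obtain ⟨c, v, rfl⟩ := exists_cons u
    cases c
    · exact Or.inr (Or.inl ⟨v, rfl⟩)
    · exact Or.inr (Or.inr ⟨v, rfl⟩)

/-! ### generators as permutations -/

def x0f : Ca → Ca := fun w =>
  match w 0 with
  | false => cons false w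
  | true =>
    match w 1 with
    | false => cons false (cons true (tl (tl w)))
    | true => tl w

def x0b : Ca → Ca := fun w =>
  match w 0 with
  | true => cons true w
  | false =>
    match w 1 with
    | true => cons true (cons false (tl (tl w)))
    | false => tl w

def x0e : Equiv.Perm Ca where
  toFun := x0f
  invFun := x0b
  left_inv := by
    intro w
    rcases cases3 w with ⟨u, rfl⟩ | ⟨u, rfl⟩ | ⟨u, rfl⟩ <;> rfl
  right_inv := by
    intro w
    rcases cases3 w with ⟨u, rfl⟩ | ⟨u, rfl⟩ | ⟨u, rfl⟩
    · obtain ⟨c, v, rfl⟩ := exists_cons u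
      cases c <;> rfl
    · rfl
    · rfl

def s1f : Ca → Ca := fun w =>
  match w 0 with
  | false => cons true w
  | true =>
    match w 1 with
    | false => tl w
    | true => w

def s1e : Equiv.Perm Ca where
  toFun := s1f
  invFun := s1f
  left_inv := by
    intro w
    rcases cases3 w with ⟨u, rfl⟩ | ⟨u, rfl⟩ | ⟨u, rfl⟩ <;> rfl
  right_inv := by
    intro w
    rcases cases3 w with ⟨u, rfl⟩ | ⟨u, rfl⟩ | ⟨u, rfl⟩ <;> rfl

def t1e : Equiv.Perm Ca where
  toFun := fun w => cons (!(w 0)) (tl w)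
  invFun := fun w => cons (!(w 0)) (tl w)
  left_inv := by
    intro w
    simp only [cons_zero, tl_cons, Bool.not_not]
    exact cons_tl w
  right_inv := by
    intro w
    simp only [cons_zero, tl_cons, Bool.not_not]
    exact cons_tl w

@[simp] lemma x0_f (u : Ca) : x0e (cons false u) = cons false (cons false u) := rfl
@[simp] lemma x0_tf (u : Ca) : x0e (cons true (cons false u)) = cons false (cons true u) := rfl
@[simp] lemma x0_tt (u : Ca) : x0e (cons true (cons true u)) = cons true u := rfl
@[simp] lemma s1_f (u : Ca) : s1e (cons false u) = cons true (cons false u) := rfl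
@[simp] lemma s1_tf (u : Ca) : s1e (cons true (cons false u)) = cons false u := rfl
@[simp] lemma s1_tt (u : Ca) : s1e (cons true (cons true u)) = cons true (cons true u) := rfl
@[simp] lemma t1_ap (b : Bool) (u : Ca) : t1e (cons b u) = cons (!b) u := rfl

/-! ### the doubling operator Φ -/

def PhiF (f : Ca → Ca) : Ca → Ca := fun w =>
  match w 0 with
  | false => w
  | true => cons true (f (tl w))

def Phi (f : Equiv.Perm Ca) : Equiv.Perm Ca where
  toFun := PhiF f
  invFun := PhiF f.symm
  left_inv := by
    intro w
    obtain ⟨b, u, rfl⟩ := exists_cons w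
    cases b
    · rfl
    · show PhiF f.symm (cons true (f u)) = cons true u
      show cons true (f.symm (f u)) = cons true u
      simp
  right_inv := by
    intro w
    obtain ⟨b, u, rfl⟩ := exists_cons w
    cases b
    · rfl
    · show PhiF f (cons true (f.symm u)) = cons true u
      show cons true (f (f.symm u)) = cons true u
      simp

@[simp] lemma Phi_f (f : Equiv.Perm Ca) (u : Ca) : Phi f (cons false u) = cons false u := rfl
@[simp] lemma Phi_t (f : Equiv.Perm Ca) (u : Ca) :
    Phi f (cons true u) = cons true (f u) := rfl

lemma Phi_mul (f g : Equiv.Perm Ca) : Phi (f * g) = Phi f * Phi g := by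
  apply Equiv.ext
  intro w
  obtain ⟨b, u, rfl⟩ := exists_cons w
  cases b <;> simp [Equiv.Perm.mul_apply]

@[simp] lemma Phi_one : Phi 1 = 1 := by
  apply Equiv.ext
  intro w
  obtain ⟨b, u, rfl⟩ := exists_cons w
  cases b <;> simp

lemma Phi_inj : Function.Injective Phi := by
  intro f g h
  apply Equiv.ext
  intro u
  have := congrArg (fun p => p (cons true u)) (congrArg (fun (e : Equiv.Perm Ca) => (e : Ca → Ca)) h)
  simp only [Phi_t] at this
  exact (cons_inj this).2



/-! ### indexed generators -/

def xp (i : ℕ) : Equiv.Perm Ca := Phi^[i] x0e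
def sp (k : ℕ) : Equiv.Perm Ca := Phi^[k] s1e
def tp (k : ℕ) : Equiv.Perm Ca := Phi^[k] t1e

@[simp] lemma xp_zero : xp 0 = x0e := rfl
@[simp] lemma sp_zero : sp 0 = s1e := rfl
@[simp] lemma tp_zero : tp 0 = t1e := rfl
lemma xp_succ (i : ℕ) : xp (i+1) = Phi (xp i) := Function.iterate_succ_apply' _ _ _
lemma sp_succ (i : ℕ) : sp (i+1) = Phi (sp i) := Function.iterate_succ_apply' _ _ _
lemma tp_succ (i : ℕ) : tp (i+1) = Phi (tp i) := Function.iterate_succ_apply' _ _ _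

/-! ### two key commutation lemmas -/

lemma phi_x0 (f : Equiv.Perm Ca) : Phi f * x0e = x0e * Phi (Phi f) := by
  apply Equiv.ext
  intro w
  rcases cases3 w with ⟨u, rfl⟩ | ⟨u, rfl⟩ | ⟨u, rfl⟩ <;>
    simp [Equiv.Perm.mul_apply]

lemma phi2_fix (f : Equiv.Perm Ca) (v : Ca)
    (hv : ¬ ∃ u, v = cons true (cons true u)) : Phi (Phi f) v = v := by
  rcases cases3 v with ⟨u, rfl⟩ | ⟨u, rfl⟩ | ⟨u, rfl⟩
  · simp
  · simp
  · exact absurd ⟨u, rfl⟩ hv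

lemma comm_phi2 (g : Equiv.Perm Ca)
    (hg : ∀ u, g (cons true (cons true u)) = cons true (cons true u))
    (f : Equiv.Perm Ca) : g * Phi (Phi f) = Phi (Phi f) * g := by
  apply Equiv.ext
  intro w
  simp only [Equiv.Perm.mul_apply]
  by_cases hw : ∃ u, w = cons true (cons true u)
  · obtain ⟨u, rfl⟩ := hw
    simp [hg]
  · rw [phi2_fix f w hw, phi2_fix f (g w)]
    rintro ⟨u, hu⟩
    apply hw
    have : g w = g (cons true (cons true u)) := by rw [hg, ← hu]
    exact ⟨u, g.injective this⟩

/-! ### base-case identities -/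

lemma relB2b : s1e * Phi s1e * s1e = Phi s1e * s1e * Phi s1e := by
  apply Equiv.ext
  intro w
  obtain ⟨b1, w1, rfl⟩ := exists_cons w
  obtain ⟨b2, w2, rfl⟩ := exists_cons w1
  obtain ⟨b3, u, rfl⟩ := exists_cons w2
  cases b1 <;> cases b2 <;> cases b3 <;> simp [Equiv.Perm.mul_apply]

lemma relB4b : s1e * Phi t1e * s1e = Phi t1e * s1e * Phi t1e := by
  apply Equiv.ext
  intro w
  obtain ⟨b1, w1, rfl⟩ := exists_cons w
  obtain ⟨b2, w2, rfl⟩ := exists_cons w1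
  obtain ⟨b3, u, rfl⟩ := exists_cons w2
  cases b1 <;> cases b2 <;> cases b3 <;> simp [Equiv.Perm.mul_apply]

lemma relC2b : s1e * Phi x0e = x0e * (Phi s1e * s1e) := by
  apply Equiv.ext
  intro w
  obtain ⟨b1, w1, rfl⟩ := exists_cons w
  obtain ⟨b2, w2, rfl⟩ := exists_cons w1
  obtain ⟨b3, u, rfl⟩ := exists_cons w2
  cases b1 <;> cases b2 <;> cases b3 <;> simp [Equiv.Perm.mul_apply]

lemma relC4b : s1e * x0e = Phi x0e * (s1e * Phi s1e) := by
  apply Equiv.ext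
  intro w
  obtain ⟨b1, w1, rfl⟩ := exists_cons w
  obtain ⟨b2, w2, rfl⟩ := exists_cons w1
  obtain ⟨b3, u, rfl⟩ := exists_cons w2
  cases b1 <;> cases b2 <;> cases b3 <;> simp [Equiv.Perm.mul_apply]

lemma relD2b : t1e * x0e = s1e * Phi t1e := by
  apply Equiv.ext
  intro w
  obtain ⟨b1, w1, rfl⟩ := exists_cons w
  obtain ⟨b2, u, rfl⟩ := exists_cons w1
  cases b1 <;> cases b2 <;> simp [Equiv.Perm.mul_apply]

lemma relD3b : t1e = x0e * (Phi t1e * s1e) := by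
  apply Equiv.ext
  intro w
  obtain ⟨b1, w1, rfl⟩ := exists_cons w
  obtain ⟨b2, u, rfl⟩ := exists_cons w1
  cases b1 <;> cases b2 <;> simp [Equiv.Perm.mul_apply]

/-! ### relation families -/

lemma relA' (d : ℕ) : ∀ i, xp (i+d+1) * xp i = xp i * xp (i+d+2) := by
  intro i
  induction i with
  | zero =>
    simp only [Nat.zero_add]
    rw [xp_succ d, xp_zero, phi_x0]
    congr 1
    rw [show d+2 = (d+1)+1 by rfl, xp_succ, xp_succ]
  | succ n ih =>
    have h := congrArg Phi ih
    simp only [Phi_mul] at h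
    simp only [← xp_succ] at h
    have e1 : n+1+d+1 = n+d+1+1 := by omega
    have e2 : n+1+d+2 = n+d+2+1 := by omega
    rw [e1, e2]; exact h

lemma relA {i j : ℕ} (h : i < j) : xp j * xp i = xp i * xp (j+1) := by
  obtain ⟨d, rfl⟩ : ∃ d, j = i + d + 1 := ⟨j - i - 1, by omega⟩
  have h2 : i+d+1+1 = i+d+2 := by omega
  rw [h2]; exact relA' d i

lemma relB2 (k : ℕ) : sp k * sp (k+1) * sp k = sp (k+1) * sp k * sp (k+1) := by
  induction k with
  | zero => exact relB2b
  | succ n ih =>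
    have h := congrArg Phi ih
    simp only [Phi_mul] at h
    simp only [← sp_succ] at h
    exact h

lemma relB4 (k : ℕ) : sp k * tp (k+1) * sp k = tp (k+1) * sp k * tp (k+1) := by
  induction k with
  | zero => exact relB4b
  | succ n ih =>
    have h := congrArg Phi ih
    simp only [Phi_mul] at h
    simp only [← sp_succ, ← tp_succ] at h
    exact h

lemma relC2 (k : ℕ) : sp k * xp (k+1) = xp k * (sp (k+1) * sp k) := by
  induction k with
  | zero => exact relC2b
  | succ n ih =>
    have h := congrArg Phi ih
    simp only [Phi_mul] at h
    simp only [← sp_succ, ← xp_succ] at h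
    exact h

lemma relC4 (k : ℕ) : sp k * xp k = xp (k+1) * (sp k * sp (k+1)) := by
  induction k with
  | zero => exact relC4b
  | succ n ih =>
    have h := congrArg Phi ih
    simp only [Phi_mul] at h
    simp only [← sp_succ, ← xp_succ] at h
    exact h

lemma relD2 (k : ℕ) : tp k * xp k = sp k * tp (k+1) := by
  induction k with
  | zero => exact relD2b
  | succ n ih =>
    have h := congrArg Phi ih
    simp only [Phi_mul] at h
    simp only [← sp_succ, ← xp_succ, ← tp_succ] at h
    exact h

lemma relD3 (k : ℕ) : tp k = xp k * (tp (k+1) * sp k) := by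
  induction k with
  | zero => exact relD3b
  | succ n ih =>
    have h := congrArg Phi ih
    simp only [Phi_mul] at h
    simp only [← sp_succ, ← xp_succ, ← tp_succ] at h
    exact h

lemma sp_add2 (d : ℕ) : sp (d+2) = Phi (Phi (sp d)) := by
  rw [show d+2 = (d+1)+1 by rfl, sp_succ, sp_succ]
lemma tp_add2 (d : ℕ) : tp (d+2) = Phi (Phi (tp d)) := by
  rw [show d+2 = (d+1)+1 by rfl, tp_succ, tp_succ]
lemma xp_add2 (d : ℕ) : xp (d+2) = Phi (Phi (xp d)) := by
  rw [show d+2 = (d+1)+1 by rfl, xp_succ, xp_succ]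

lemma relB1 (k d : ℕ) : sp k * sp (k+d+2) = sp (k+d+2) * sp k := by
  induction k with
  | zero =>
    simp only [Nat.zero_add]
    rw [sp_add2, sp_zero]
    exact comm_phi2 s1e (fun u => s1_tt u) (sp d)
  | succ n ih =>
    have h := congrArg Phi ih
    simp only [Phi_mul] at h
    simp only [← sp_succ] at h
    have e : n+1+d+2 = n+d+2+1 := by omega
    rw [e]; exact h

lemma relB3 (k d : ℕ) : sp k * tp (k+d+2) = tp (k+d+2) * sp k := by
  induction k with
  | zero =>
    simp only [Nat.zero_add]
    rw [tp_add2, sp_zero]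
    exact comm_phi2 s1e (fun u => s1_tt u) (tp d)
  | succ n ih =>
    have h := congrArg Phi ih
    simp only [Phi_mul] at h
    simp only [← sp_succ, ← tp_succ] at h
    have e : n+1+d+2 = n+d+2+1 := by omega
    rw [e]; exact h

lemma relC1 (k d : ℕ) : sp k * xp (k+d+2) = xp (k+d+2) * sp k := by
  induction k with
  | zero =>
    simp only [Nat.zero_add]
    rw [xp_add2, sp_zero]
    exact comm_phi2 s1e (fun u => s1_tt u) (xp d)
  | succ n ih =>
    have h := congrArg Phi ih
    simp only [Phi_mul] at h
    simp only [← sp_succ, ← xp_succ] at h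
    have e : n+1+d+2 = n+d+2+1 := by omega
    rw [e]; exact h

lemma relC3 (d : ℕ) : ∀ j, sp (j+d+1) * xp j = xp j * sp (j+d+2) := by
  intro j
  induction j with
  | zero =>
    simp only [Nat.zero_add]
    rw [sp_succ d, xp_zero, phi_x0, sp_add2]
  | succ n ih =>
    have h := congrArg Phi ih
    simp only [Phi_mul] at h
    simp only [← sp_succ, ← xp_succ] at h
    have e1 : n+1+d+1 = n+d+1+1 := by omega
    have e2 : n+1+d+2 = n+d+2+1 := by omega
    rw [e1, e2]; exact h

lemma relD1 (d : ℕ) : ∀ j, tp (j+d+1) * xp j = xp j * tp (j+d+2) := by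
  intro j
  induction j with
  | zero =>
    simp only [Nat.zero_add]
    rw [tp_succ d, xp_zero, phi_x0, tp_add2]
  | succ n ih =>
    have h := congrArg Phi ih
    simp only [Phi_mul] at h
    simp only [← tp_succ, ← xp_succ] at h
    have e1 : n+1+d+1 = n+d+1+1 := by omega
    have e2 : n+1+d+2 = n+d+2+1 := by omega
    rw [e1, e2]; exact h



/-! ### a partial order on the Cantor set -/

def cle (a b : Ca) : Prop :=
  a = b ∨ ∃ n, (∀ k, k < n → a k = b k) ∧ a n = false ∧ b n = true

lemma cle_refl (a : Ca) : cle a a := Or.inl rfl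

lemma cle_trans {a b c : Ca} (hab : cle a b) (hbc : cle b c) : cle a c := by
  rcases hab with rfl | ⟨n, hn, han, hbn⟩
  · exact hbc
  rcases hbc with rfl | ⟨m, hm, hbm, hcm⟩
  · exact Or.inr ⟨n, hn, han, hbn⟩
  rcases lt_trichotomy n m with h | rfl | h
  · exact Or.inr ⟨n, fun k hk => (hn k hk).trans (hm k (hk.trans h)), han, (hm n h) ▸ hbn⟩
  · exact Or.inr ⟨n, fun k hk => (hn k hk).trans (hm k hk), han, hcm⟩
  · refine Or.inr ⟨m, fun k hk => (hn k (hk.trans h)).trans (hm k hk), ?_, hcm⟩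
    rw [hn m h]; exact hbm

lemma cle_antisymm {a b : Ca} (hab : cle a b) (hba : cle b a) : a = b := by
  rcases hab with rfl | ⟨n, hn, han, hbn⟩
  · rfl
  rcases hba with h | ⟨m, hm, hbm, ham⟩
  · exact h.symm
  exfalso
  rcases lt_trichotomy n m with h | rfl | h
  · rw [hm n h] at hbn; rw [hbn] at han; exact absurd han (by simp)
  · rw [han] at ham; exact absurd ham (by simp)
  · rw [hn m h] at ham; rw [ham] at hbm; exact absurd hbm (by simp)

lemma cle_cons {a a' : Ca} (b : Bool) (h : cle a a') : cle (cons b a) (cons b a') := by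
  rcases h with rfl | ⟨n, hn, han, hbn⟩
  · exact cle_refl _
  refine Or.inr ⟨n+1, ?_, han, hbn⟩
  intro k hk
  cases k with
  | zero => rfl
  | succ k => simpa using hn k (by omega)

lemma cle_cons_false (u : Ca) : cle (cons false u) u := by
  by_cases h : ∃ k, u k = true
  · refine Or.inr ⟨Nat.find h, ?_, ?_, Nat.find_spec h⟩
    · intro k hk
      have hk' : u k = false := by
        have := Nat.find_min h hk
        exact Bool.not_eq_true _ ▸ (by simpa using this)
      cases k with
      | zero => simp [hk']
      | succ m =>
        have hm : u m = false := by
          have := Nat.find_min h (show m < Nat.find h by omega)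
          simpa using this
        simp [hm, hk']
    · cases hfind : Nat.find h with
      | zero => rfl
      | succ m =>
        have hm : u m = false := by
          have := Nat.find_min h (show m < Nat.find h by omega)
          simpa using this
        simp [hm]
  · push_neg at h
    have h' : ∀ k, u k = false := fun k => by simpa using h k
    left
    funext n
    cases n with
    | zero => simp [h' 0]
    | succ m => simp [h' m, h' (m+1)]

lemma cle_cons_true (u : Ca) : cle u (cons true u) := by
  by_cases h : ∃ k, u k = false
  · refine Or.inr ⟨Nat.find h, ?_, Nat.find_spec h, ?_⟩
    · intro k hk
      have hk' : u k = true := by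
        have := Nat.find_min h hk
        simpa using this
      cases k with
      | zero => simp [hk']
      | succ m =>
        have hm : u m = true := by
          have := Nat.find_min h (show m < Nat.find h by omega)
          simpa using this
        simp [hm, hk']
    · cases hfind : Nat.find h with
      | zero => rfl
      | succ m =>
        have hm : u m = true := by
          have := Nat.find_min h (show m < Nat.find h by omega)
          simpa using this
        simp [hm]
  · push_neg at h
    left
    funext n
    cases n with
    | zero =>
      have h0 : u 0 = true := by simpa using h 0
      simp [h0]
    | succ m =>
      have h1 : u m = true := by simpa using h m
      have h2 : u (m+1) = true := by simpa using h (m+1)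
      simp [h1, h2]

lemma x0_le (w : Ca) : cle (x0e w) w := by
  rcases cases3 w with ⟨u, rfl⟩ | ⟨u, rfl⟩ | ⟨u, rfl⟩
  · rw [x0_f]
    exact cle_cons false (cle_cons_false u)
  · rw [x0_tf]
    exact Or.inr ⟨0, fun k hk => absurd hk (by omega), rfl, rfl⟩
  · rw [x0_tt]
    exact cle_cons true (cle_cons_true u)

lemma phi_le {f : Equiv.Perm Ca} (hf : ∀ w, cle (f w) w) (w : Ca) : cle (Phi f w) w := by
  obtain ⟨b, u, rfl⟩ := exists_cons w
  cases b
  · rw [Phi_f]; exact cle_refl _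
  · rw [Phi_t]; exact cle_cons true (hf u)

lemma xp_le (i : ℕ) (w : Ca) : cle (xp i w) w := by
  induction i generalizing w with
  | zero => exact x0_le w
  | succ n ih => rw [xp_succ]; exact phi_le ih w

/-! ### positive words -/

def evalL (l : List ℕ) : Equiv.Perm Ca := (l.map xp).prod

@[simp] lemma evalL_nil : evalL [] = 1 := rfl
@[simp] lemma evalL_cons (i : ℕ) (l : List ℕ) : evalL (i :: l) = xp i * evalL l := by
  simp [evalL]

lemma evalL_le (l : List ℕ) (w : Ca) : cle (evalL l w) w := by
  induction l generalizing w with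
  | nil => exact cle_refl _
  | cons i t ih =>
    rw [evalL_cons]
    exact cle_trans (xp_le i (evalL t w)) (ih w)

def pt : Ca := fun k => decide (k = 0)

lemma x0_moves : x0e (cons false pt) ≠ cons false pt := by
  rw [x0_f]
  intro h
  have := congrFun h 1
  simp [pt] at this

lemma xp_moves (i : ℕ) : ∃ w, xp i w ≠ w := by
  induction i with
  | zero => exact ⟨cons false pt, x0_moves⟩
  | succ n ih =>
    obtain ⟨w, hw⟩ := ih
    refine ⟨cons true w, ?_⟩
    rw [xp_succ, Phi_t]
    intro h
    exact hw (cons_inj h).2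

lemma evalL_ne_one (i : ℕ) (l : List ℕ) : evalL (i :: l) ≠ 1 := by
  intro h
  have h' : ∀ w, xp i (evalL l w) = w := by
    intro w
    have := congrArg (fun (e : Equiv.Perm Ca) => e w) h
    simpa [Equiv.Perm.mul_apply] using this
  have hfix : ∀ w, evalL l w = w := by
    intro w
    refine cle_antisymm (evalL_le l w) ?_
    have : cle (xp i (evalL l w)) (evalL l w) := xp_le _ _
    rw [h' w] at this
    exact this
  obtain ⟨w, hw⟩ := xp_moves i
  apply hw
  have := h' w
  rw [hfix w] at this
  exact this

lemma evalL_shift1 (l : List ℕ) : evalL (l.map (· + 1)) = Phi (evalL l) := by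
  induction l with
  | nil => simp
  | cons i t ih => simp [xp_succ, Phi_mul, ih]

lemma evalL_shift (a : ℕ) (l : List ℕ) : evalL (l.map (· + a)) = Phi^[a] (evalL l) := by
  induction a with
  | zero => simp
  | succ n ih =>
    have : l.map (· + (n+1)) = (l.map (· + n)).map (· + 1) := by
      rw [List.map_map]
      apply List.map_congr_left
      intro x _
      simp [Function.comp]; omega
    rw [this, evalL_shift1, ih, Function.iterate_succ_apply']

lemma phiIter_inj (a : ℕ) : Function.Injective (Phi^[a]) :=
  Function.Injective.iterate Phi_inj a

lemma no_eq (h g : Equiv.Perm Ca) (hle : ∀ w, cle (h w) w) : x0e * h ≠ Phi g := by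
  intro heq
  have h1 : x0e (h (cons false pt)) = cons false pt := by
    have := congrArg (fun (e : Equiv.Perm Ca) => e (cons false pt)) heq
    simpa [Equiv.Perm.mul_apply] using this
  have h2 : h (cons false pt) = cons false pt := by
    refine cle_antisymm (hle _) ?_
    have := x0_le (h (cons false pt))
    rw [h1] at this
    exact this
  rw [h2] at h1
  exact x0_moves h1

lemma phiIter_mul (a : ℕ) (f g : Equiv.Perm Ca) :
    Phi^[a] (f * g) = Phi^[a] f * Phi^[a] g := by
  induction a generalizing f g with
  | zero => rfl
  | succ n ih =>
    rw [Function.iterate_succ_apply, Function.iterate_succ_apply,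
      Function.iterate_succ_apply, Phi_mul, ih]

/-- the key contradiction: a sorted positive word starting with `a` cannot equal
one all of whose letters are `> a`. -/
lemma key_contra {a b : ℕ} (t₁ t₂ : List ℕ) (hab : a < b)
    (h₁ : ∀ x ∈ t₁, a ≤ x) (h₂ : ∀ x ∈ t₂, b ≤ x)
    (heq : evalL (a :: t₁) = evalL (b :: t₂)) : False := by
  have e₁ : t₁ = (t₁.map (· - a)).map (· + a) := by
    rw [List.map_map]
    conv_lhs => rw [← List.map_id t₁]
    apply List.map_congr_left
    intro x hx
    have := h₁ x hx
    simp only [Function.comp, id]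
    omega
  have e₂ : b :: t₂ = (((b :: t₂).map (fun x => x - a - 1)).map (· + 1)).map (· + a) := by
    rw [List.map_map, List.map_map]
    conv_lhs => rw [← List.map_id (b :: t₂)]
    apply List.map_congr_left
    intro x hx
    have hbx : b ≤ x := by
      rcases List.mem_cons.1 hx with rfl | hx'
    -- x = b or x ∈ t₂
      · exact le_refl _
      · exact h₂ _ hx'
    simp only [Function.comp, id]
    omega
  have lhs : evalL (a :: t₁) = Phi^[a] (x0e * evalL (t₁.map (· - a))) := by
    rw [evalL_cons]
    conv_lhs => rw [e₁]
    rw [evalL_shift, phiIter_mul]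
    rfl
  have rhs : evalL (b :: t₂) = Phi^[a] (Phi (evalL ((b :: t₂).map (fun x => x - a - 1)))) := by
    conv_lhs => rw [e₂]
    rw [evalL_shift, evalL_shift1]
  rw [lhs, rhs] at heq
  have := phiIter_inj a heq
  exact no_eq _ _ (evalL_le _) this

/-- distinct sorted positive words have distinct actions -/
lemma sorted_eval_inj : ∀ (N : ℕ) (l₁ l₂ : List ℕ), l₁.length + l₂.length ≤ N →
    l₁.Pairwise (· ≤ ·) → l₂.Pairwise (· ≤ ·) → evalL l₁ = evalL l₂ → l₁ = l₂ := by
  intro N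
  induction N with
  | zero =>
    intro l₁ l₂ hlen _ _ _
    cases l₁ <;> cases l₂ <;> simp_all
  | succ N ih =>
    intro l₁ l₂ hlen hs₁ hs₂ heq
    match l₁, l₂ with
    | [], [] => rfl
    | [], b :: t₂ => exact absurd heq.symm (by simpa using evalL_ne_one b t₂)
    | a :: t₁, [] => exact absurd heq (by simpa using evalL_ne_one a t₁)
    | a :: t₁, b :: t₂ =>
      rcases lt_trichotomy a b with h | rfl | h
      · exact absurd heq (fun heq => key_contra t₁ t₂ h
          (fun x hx => (List.pairwise_cons.1 hs₁).1 x hx)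
          (fun x hx => (List.pairwise_cons.1 hs₂).1 x hx) heq)
      · rw [evalL_cons, evalL_cons] at heq
        have : evalL t₁ = evalL t₂ := mul_left_cancel heq
        have ht := ih t₁ t₂ (by simp at hlen ⊢; omega)
          (List.pairwise_cons.1 hs₁).2 (List.pairwise_cons.1 hs₂).2 this
        rw [ht]
      · exact absurd heq.symm (fun heq => key_contra t₂ t₁ h
          (fun x hx => (List.pairwise_cons.1 hs₂).1 x hx)
          (fun x hx => (List.pairwise_cons.1 hs₁).1 x hx) heq)



/-! ### abstract presented-group helpers -/

lemma mk_rel {α : Type*} {rels : Set (FreeGroup α)} {u v : FreeGroup α}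
    (h : grel u v ∈ rels) : PresentedGroup.mk rels u = PresentedGroup.mk rels v := by
  have hm : grel u v ∈ Subgroup.normalClosure rels := Subgroup.subset_normalClosure h
  have h1 : PresentedGroup.mk rels (grel u v) = 1 := (QuotientGroup.eq_one_iff _).mpr hm
  rw [grel, map_mul, map_inv] at h1
  exact mul_inv_eq_one.mp h1

/-! ### Thompson's group F side -/

def ofg (i : ℕ) : GF := PresentedGroup.of i

lemma gf_rel {i j : ℕ} (h : i < j) : ofg j * ofg i = ofg i * ofg (j+1) := by
  have := mk_rel (rels := fRels) (u := FreeGroup.of j * FreeGroup.of i)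
    (v := FreeGroup.of i * FreeGroup.of (j+1)) ⟨i, j, h, rfl⟩
  simpa [map_mul, ofg, PresentedGroup.of] using this

def evalGF (l : List ℕ) : GF := (l.map ofg).prod

@[simp] lemma evalGF_nil : evalGF [] = 1 := rfl
@[simp] lemma evalGF_cons (i : ℕ) (l : List ℕ) : evalGF (i :: l) = ofg i * evalGF l := by
  simp [evalGF]
lemma evalGF_append (l₁ l₂ : List ℕ) : evalGF (l₁ ++ l₂) = evalGF l₁ * evalGF l₂ := by
  simp [evalGF]

lemma ore1 : ∀ (q : List ℕ) (i : ℕ), ∃ a b : List ℕ,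
    evalGF q * evalGF a = ofg i * evalGF b := by
  intro q
  induction q with
  | nil => intro i; exact ⟨[i], [], by simp⟩
  | cons j t ih =>
    intro i
    rcases lt_trichotomy j i with h | rfl | h
    · obtain ⟨a, b, hab⟩ := ih (i+1)
      refine ⟨a, j :: b, ?_⟩
      rw [evalGF_cons, evalGF_cons, mul_assoc, hab, ← mul_assoc, ← gf_rel h, mul_assoc]
    · exact ⟨[], t, by simp⟩
    · obtain ⟨a, b, hab⟩ := ih i
      refine ⟨a, (j+1) :: b, ?_⟩
      rw [evalGF_cons, evalGF_cons, mul_assoc, hab, ← mul_assoc, gf_rel h, mul_assoc]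

lemma ore : ∀ (p q : List ℕ), ∃ a b : List ℕ,
    evalGF q * evalGF a = evalGF p * evalGF b := by
  intro p
  induction p with
  | nil => intro q; exact ⟨[], q, by simp⟩
  | cons i t ih =>
    intro q
    obtain ⟨a₁, b₁, h₁⟩ := ore1 q i
    obtain ⟨a₂, b₂, h₂⟩ := ih b₁
    refine ⟨a₁ ++ a₂, b₂, ?_⟩
    rw [evalGF_append, ← mul_assoc, h₁, mul_assoc, h₂, evalGF_cons, ← mul_assoc]

lemma decomp (g : GF) : ∃ p q : List ℕ, g = evalGF p * (evalGF q)⁻¹ := by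
  have hmul : ∀ {x y : GF}, (∃ p q : List ℕ, x = evalGF p * (evalGF q)⁻¹) →
      (∃ p q : List ℕ, y = evalGF p * (evalGF q)⁻¹) →
      (∃ p q : List ℕ, x * y = evalGF p * (evalGF q)⁻¹) := by
    rintro x y ⟨p₁, q₁, rfl⟩ ⟨p₂, q₂, rfl⟩
    obtain ⟨a, b, hab⟩ := ore p₂ q₁
    refine ⟨p₁ ++ a, q₂ ++ b, ?_⟩
    have key : evalGF a * (evalGF b)⁻¹ = (evalGF q₁)⁻¹ * evalGF p₂ := by
      have h := congrArg (fun z => (evalGF q₁)⁻¹ * z * (evalGF b)⁻¹) hab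
      simpa [mul_assoc] using h
    rw [evalGF_append, evalGF_append, mul_inv_rev]
    simp only [mul_assoc]
    congr 1
    rw [← mul_assoc, ← mul_assoc, key, mul_assoc]
  let H : Subgroup GF :=
    { carrier := {x | ∃ p q : List ℕ, x = evalGF p * (evalGF q)⁻¹}
      one_mem' := ⟨[], [], by simp⟩
      mul_mem' := fun hx hy => hmul hx hy
      inv_mem' := by
        rintro x ⟨p, q, rfl⟩
        exact ⟨q, p, by rw [mul_inv_rev, inv_inv]⟩ }
  exact PresentedGroup.generated_by fRels H (fun j => ⟨[j], [], by simp [ofg]⟩) g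

lemma fRels_hold : ∀ r ∈ fRels, FreeGroup.lift xp r = 1 := by
  rintro r ⟨i, j, hij, rfl⟩
  simp only [grel, map_mul, map_inv, FreeGroup.lift_apply_of, mul_inv_eq_one]
  exact relA hij

def rhoGF : GF →* Equiv.Perm Ca := PresentedGroup.toGroup fRels_hold

lemma rho_of (i : ℕ) : rhoGF (ofg i) = xp i := PresentedGroup.toGroup.of fRels_hold

lemma rho_evalGF (l : List ℕ) : rhoGF (evalGF l) = evalL l := by
  induction l with
  | nil => simp
  | cons i t ih => rw [evalGF_cons, map_mul, ih, rho_of, evalL_cons]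

/-! ### sorting positive words in GF -/

def insL : List ℕ → ℕ → List ℕ
  | [], i => [i]
  | j :: t, i => if i ≤ j then i :: j :: t else j :: insL t (i+1)

lemma insL_mem : ∀ (t : List ℕ) (i a : ℕ), a ∈ insL t i → i ≤ a ∨ a ∈ t := by
  intro t
  induction t with
  | nil =>
    intro i a ha
    simp only [insL, List.mem_singleton] at ha
    exact Or.inl (by omega)
  | cons j t ih =>
    intro i a ha
    simp only [insL] at ha
    by_cases h : i ≤ j
    · rw [if_pos h] at ha
      rcases List.mem_cons.1 ha with rfl | ha'
      · exact Or.inl le_rfl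
      · exact Or.inr ha'
    · rw [if_neg h] at ha
      rcases List.mem_cons.1 ha with rfl | ha'
      · exact Or.inr (List.mem_cons_self)
      · rcases ih _ _ ha' with h' | h'
        · exact Or.inl (by omega)
        · exact Or.inr (List.mem_cons_of_mem _ h')

lemma insL_sorted : ∀ (t : List ℕ), t.Pairwise (· ≤ ·) → ∀ i, (insL t i).Pairwise (· ≤ ·) := by
  intro t
  induction t with
  | nil => intro _ i; simp [insL]
  | cons j t ih =>
    intro hs i
    simp only [insL]
    by_cases h : i ≤ j
    · rw [if_pos h, List.pairwise_cons]
      refine ⟨?_, hs⟩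
      intro b hb
      rcases List.mem_cons.1 hb with rfl | hb'
      · exact h
      · exact le_trans h ((List.pairwise_cons.1 hs).1 b hb')
    · rw [if_neg h, List.pairwise_cons]
      refine ⟨?_, ih (List.pairwise_cons.1 hs).2 (i+1)⟩
      intro b hb
      rcases insL_mem t (i+1) b hb with h' | h'
      · omega
      · exact (List.pairwise_cons.1 hs).1 b h'

lemma insL_eval : ∀ (t : List ℕ) (i : ℕ), evalGF (insL t i) = ofg i * evalGF t := by
  intro t
  induction t with
  | nil => intro i; simp [insL]
  | cons j t ih =>
    intro i
    simp only [insL]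
    by_cases h : i ≤ j
    · rw [if_pos h, evalGF_cons]
    · rw [if_neg h, evalGF_cons, ih (i+1), ← mul_assoc,
        ← gf_rel (show j < i by omega), evalGF_cons, ← mul_assoc]

lemma sortGF : ∀ l : List ℕ, ∃ l', l'.Pairwise (· ≤ ·) ∧ evalGF l' = evalGF l := by
  intro l
  induction l with
  | nil => exact ⟨[], by simp, rfl⟩
  | cons i t ih =>
    obtain ⟨t', hs, he⟩ := ih
    exact ⟨insL t' i, insL_sorted t' hs i, by rw [insL_eval, he, evalGF_cons]⟩

/-! ### injectivity of the representation of F -/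

lemma rho_inj : Function.Injective rhoGF := by
  rw [injective_iff_map_eq_one]
  intro g hg
  obtain ⟨p, q, rfl⟩ := decomp g
  rw [map_mul, map_inv] at hg
  have h1 : rhoGF (evalGF p) = rhoGF (evalGF q) := mul_inv_eq_one.mp hg
  obtain ⟨p', hsp, hep⟩ := sortGF p
  obtain ⟨q', hsq, heq'⟩ := sortGF q
  have h2 : evalL p' = evalL q' := by
    rw [← rho_evalGF, ← rho_evalGF, hep, heq', h1]
  have h3 := sorted_eval_inj (p'.length + q'.length) p' q' le_rfl hsp hsq h2
  refine mul_inv_eq_one.mpr ?_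
  rw [← hep, ← heq', h3]

/-! ### the homomorphism GBV → Perm Ca -/

def bvAsgn : BVGen → Equiv.Perm Ca
  | .x i => xp i
  | .s k => sp k
  | .t k => tp k

lemma bvRels_hold : ∀ r ∈ BVGen.bvRels, FreeGroup.lift bvAsgn r = 1 := by
  intro r hr
  rcases hr with ⟨i,j,hij,rfl⟩ | ⟨i,j,h1,h2,rfl⟩ | ⟨i,h1,rfl⟩ | ⟨i,j,h1,h2,rfl⟩ |
    ⟨i,h1,rfl⟩ | ⟨i,j,h1,h2,rfl⟩ | ⟨i,h1,rfl⟩ | ⟨i,j,h2,rfl⟩ | ⟨i,rfl⟩ |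
    ⟨i,j,h2,rfl⟩ | ⟨i,h1,rfl⟩ | ⟨i,h1,rfl⟩ <;>
    simp only [grel, BVGen.X, BVGen.S, BVGen.T, map_mul, map_inv, FreeGroup.lift_apply_of,
      bvAsgn, mul_inv_eq_one]
  · -- A
    exact relA hij
  · -- B1
    obtain ⟨k, rfl⟩ : ∃ k, i = k+1 := ⟨i-1, by omega⟩
    obtain ⟨d, rfl⟩ : ∃ d, j = k+d+3 := ⟨j-k-3, by omega⟩
    have e1 : k+1-1 = k := by omega
    have e2 : k+d+3-1 = k+d+2 := by omega
    rw [e1, e2]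
    exact relB1 k d
  · -- B2
    obtain ⟨k, rfl⟩ : ∃ k, i = k+1 := ⟨i-1, by omega⟩
    have e1 : k+1-1 = k := by omega
    have e2 : k+1+1-1 = k+1 := by omega
    rw [e1, e2]
    exact relB2 k
  · -- B3
    obtain ⟨k, rfl⟩ : ∃ k, i = k+1 := ⟨i-1, by omega⟩
    obtain ⟨d, rfl⟩ : ∃ d, j = k+d+3 := ⟨j-k-3, by omega⟩
    have e1 : k+1-1 = k := by omega
    have e2 : k+d+3-1 = k+d+2 := by omega
    rw [e1, e2]
    exact relB3 k d
  · -- B4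
    obtain ⟨k, rfl⟩ : ∃ k, i = k+1 := ⟨i-1, by omega⟩
    have e1 : k+1-1 = k := by omega
    have e2 : k+1+1-1 = k+1 := by omega
    rw [e1, e2]
    exact relB4 k
  · -- C1
    obtain ⟨k, rfl⟩ : ∃ k, i = k+1 := ⟨i-1, by omega⟩
    obtain ⟨d, rfl⟩ : ∃ d, j = k+d+2 := ⟨j-k-2, by omega⟩
    have e1 : k+1-1 = k := by omega
    rw [e1]
    exact relC1 k d
  · -- C2
    obtain ⟨k, rfl⟩ : ∃ k, i = k+1 := ⟨i-1, by omega⟩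
    have e1 : k+1-1 = k := by omega
    have e2 : k+1+1-1 = k+1 := by omega
    rw [e1, e2, mul_assoc]
    exact relC2 k
  · -- C3
    obtain ⟨d, rfl⟩ : ∃ d, i = j+d+2 := ⟨i-j-2, by omega⟩
    have e1 : j+d+2-1 = j+d+1 := by omega
    have e2 : j+d+2+1-1 = j+d+2 := by omega
    rw [e1, e2]
    exact relC3 d j
  · -- C4
    have e1 : i+1-1 = i := by omega
    have e2 : i+2-1 = i+1 := by omega
    rw [e1, e2, mul_assoc]
    exact relC4 i
  · -- D1
    obtain ⟨d, rfl⟩ : ∃ d, i = j+d+2 := ⟨i-j-2, by omega⟩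
    have e1 : j+d+2-1 = j+d+1 := by omega
    have e2 : j+d+2+1-1 = j+d+2 := by omega
    rw [e1, e2]
    exact relD1 d j
  · -- D2
    obtain ⟨k, rfl⟩ : ∃ k, i = k+1 := ⟨i-1, by omega⟩
    have e1 : k+1-1 = k := by omega
    have e2 : k+1+1-1 = k+1 := by omega
    rw [e1, e2]
    exact relD2 k
  · -- D3
    obtain ⟨k, rfl⟩ : ∃ k, i = k+1 := ⟨i-1, by omega⟩
    have e1 : k+1-1 = k := by omega
    have e2 : k+1+1-1 = k+1 := by omega
    rw [e1, e2, mul_assoc]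
    exact relD3 k

def psiBV : GBV →* Equiv.Perm Ca := PresentedGroup.toGroup bvRels_hold

/-! ### the homomorphism GF → GBV -/

lemma bv_x_rel {i j : ℕ} (h : i < j) :
    GBV.xg j * GBV.xg i = GBV.xg i * GBV.xg (j+1) := by
  have := mk_rel (rels := BVGen.bvRels) (u := BVGen.X j * BVGen.X i)
    (v := BVGen.X i * BVGen.X (j+1)) (Or.inl ⟨i, j, h, rfl⟩)
  simpa [map_mul, BVGen.X, GBV.xg, PresentedGroup.of] using this

lemma fRels_in_bv : ∀ r ∈ fRels, FreeGroup.lift (fun i => GBV.xg i) r = 1 := by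
  rintro r ⟨i, j, hij, rfl⟩
  simp only [grel, map_mul, map_inv, FreeGroup.lift_apply_of, mul_inv_eq_one]
  exact bv_x_rel hij

def phiFB : GF →* GBV := PresentedGroup.toGroup fRels_in_bv

lemma phiFB_of (i : ℕ) : phiFB (PresentedGroup.of i) = GBV.xg i :=
  PresentedGroup.toGroup.of fRels_in_bv

lemma comp_eq : psiBV.comp phiFB = rhoGF := by
  apply PresentedGroup.ext
  intro i
  show psiBV (phiFB (PresentedGroup.of i)) = rhoGF (PresentedGroup.of i)
  rw [phiFB_of]
  show psiBV (PresentedGroup.of (BVGen.x i)) = rhoGF (PresentedGroup.of i)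
  rw [psiBV, rhoGF, PresentedGroup.toGroup.of, PresentedGroup.toGroup.of]
  rfl

lemma phiFB_inj : Function.Injective phiFB := by
  have h : Function.Injective (⇑psiBV ∘ ⇑phiFB) := by
    rw [← MonoidHom.coe_comp, comp_eq]
    exact rho_inj
  exact h.of_comp

end FBV

/-- The assignment `x_i ↦ x_i` extends to a well-defined group homomorphism
`F → BV`, and this homomorphism is injective. -/
theorem f_to_bv_injective :
    ∃ φ : GF →* GBV,
      (∀ i : ℕ, φ (PresentedGroup.of i) = GBV.xg i) ∧ Function.Injective φ :=
  ⟨FBV.phiFB, FBV.phiFB_of, FBV.phiFB_inj⟩
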